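/- Let Q : ℝ² → ℝ be the harmonic polynomial Q(x,y) = x⁴ + y⁴ − 6x²y², and let G(x,y) = Q(x,y)·log(x² + y²) for (x,y) ≠ (0,0). Then there exists a constant C > 0 such that for all (x,y) with 0 < x² + y² < 1, |∂⁴G/∂x²∂y²(x,y) + 24·log(x² + y²)| ≤ C; that is, the mixed fourth partial derivative ∂_{xxyy}G equals −24·log(x² + y²) plus a function bounded on the punctured unit ball. -/

import Mathlib

/-- Partial derivative in the first (x) variable. -/
noncomputable def pdx (f : ℝ → ℝ → ℝ) : ℝ → ℝ → ℝ := fun x y => deriv (fun x' => f x' y) x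

/-- Partial derivative in the second (y) variable. -/
noncomputable def pdy (f : ℝ → ℝ → ℝ) : ℝ → ℝ → ℝ := fun x y => deriv (fun y' => f x y') y

/-- The harmonic polynomial `Q(x,y) = x⁴ + y⁴ − 6x²y²`. -/
noncomputable def Q : ℝ → ℝ → ℝ := fun x y => x ^ 4 + y ^ 4 - 6 * x ^ 2 * y ^ 2

/-- `G(x,y) = Q(x,y) · log(x² + y²)`. -/
noncomputable def G : ℝ → ℝ → ℝ := fun x y => Q x y * Real.log (x ^ 2 + y ^ 2)

noncomputable def F1 : ℝ → ℝ → ℝ := fun x y =>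
  (4*y^3 - 12*x^2*y) * Real.log (x^2 + y^2) + (2*x^4*y - 12*x^2*y^3 + 2*y^5) / (x^2 + y^2)

noncomputable def F2 : ℝ → ℝ → ℝ := fun x y =>
  (12*y^2 - 12*x^2) * Real.log (x^2 + y^2) +
    (2*x^6 - 62*x^4*y^2 - 18*x^2*y^4 + 14*y^6) / (x^2 + y^2)^2

noncomputable def F3 : ℝ → ℝ → ℝ := fun x y =>
  (-24*x) * Real.log (x^2 + y^2) +
    (-20*x^7 - 12*x^5*y^2 - 188*x^3*y^4 - 68*x*y^6) / (x^2 + y^2)^3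

noncomputable def F4 : ℝ → ℝ → ℝ := fun x y =>
  (-24) * Real.log (x^2 + y^2) +
    (-68*x^8 - 272*x^6*y^2 + 360*x^4*y^4 - 272*x^2*y^6 - 68*y^8) / (x^2 + y^2)^4

lemma hsy (x y : ℝ) : HasDerivAt (fun y' : ℝ => x^2 + y'^2) (2*y) y := by
  have := (hasDerivAt_pow 2 y).const_add (x^2)
  exact this.congr_deriv (by norm_num)

lemma hsx (x y : ℝ) : HasDerivAt (fun x' : ℝ => x'^2 + y^2) (2*x) x := by
  have := (hasDerivAt_pow 2 x).add_const (y^2)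
  exact this.congr_deriv (by norm_num)

lemma hlogy (x y : ℝ) (h : 0 < x^2 + y^2) :
    HasDerivAt (fun y' : ℝ => Real.log (x^2 + y'^2)) ((x^2+y^2)⁻¹ * (2*y)) y :=
  (Real.hasDerivAt_log h.ne').comp (h₂ := Real.log) y (hsy x y)

lemma hlogx (x y : ℝ) (h : 0 < x^2 + y^2) :
    HasDerivAt (fun x' : ℝ => Real.log (x'^2 + y^2)) ((x^2+y^2)⁻¹ * (2*x)) x :=
  (Real.hasDerivAt_log h.ne').comp (h₂ := Real.log) x (hsx x y)

lemma hd1 (x y : ℝ) (h : 0 < x^2 + y^2) :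
    HasDerivAt (fun y' => G x y') (F1 x y) y := by
  have hQ : HasDerivAt (fun y' : ℝ => x^4 + y'^4 - 6*x^2*y'^2) (4*y^3 - 12*x^2*y) y := by
    have := ((hasDerivAt_pow 4 y).const_add (x^4)).sub ((hasDerivAt_pow 2 y).const_mul (6*x^2))
    exact this.congr_deriv (by push_cast; ring)
  have H := hQ.mul (hlogy x y h)
  have hfun : (fun y' => G x y') = fun y' : ℝ => (x^4 + y'^4 - 6*x^2*y'^2) * Real.log (x^2 + y'^2) := by
    funext y'; simp only [G, Q]
  rw [hfun]
  refine H.congr_deriv ?_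
  simp only [F1]
  field_simp
  ring

lemma hd2 (x y : ℝ) (h : 0 < x^2 + y^2) :
    HasDerivAt (fun y' => F1 x y') (F2 x y) y := by
  have hP : HasDerivAt (fun y' : ℝ => 4*y'^3 - 12*x^2*y') (12*y^2 - 12*x^2) y := by
    have := ((hasDerivAt_pow 3 y).const_mul (4:ℝ)).sub ((hasDerivAt_id y).const_mul (12*x^2))
    exact this.congr_deriv (by push_cast; ring)
  have hNum : HasDerivAt (fun y' : ℝ => 2*x^4*y' - 12*x^2*y'^3 + 2*y'^5)
      (2*x^4 - 36*x^2*y^2 + 10*y^4) y := by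
    have := (((hasDerivAt_id y).const_mul (2*x^4)).sub
      ((hasDerivAt_pow 3 y).const_mul (12*x^2))).add ((hasDerivAt_pow 5 y).const_mul (2:ℝ))
    exact this.congr_deriv (by push_cast; ring)
  have H := (hP.mul (hlogy x y h)).add (hNum.div (hsy x y) h.ne')
  refine H.congr_deriv ?_
  simp only [F1, F2]
  field_simp
  ring

lemma hd3 (x y : ℝ) (h : 0 < x^2 + y^2) :
    HasDerivAt (fun x' => F2 x' y) (F3 x y) x := by
  have hP : HasDerivAt (fun x' : ℝ => 12*y^2 - 12*x'^2) (-24*x) x := by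
    have := (hasDerivAt_const x (12*y^2)).sub ((hasDerivAt_pow 2 x).const_mul (12:ℝ))
    exact this.congr_deriv (by push_cast; ring)
  have hNum : HasDerivAt (fun x' : ℝ => 2*x'^6 - 62*y^2*x'^4 - 18*y^4*x'^2 + 14*y^6)
      (12*x^5 - 248*x^3*y^2 - 36*x*y^4) x := by
    have := ((((hasDerivAt_pow 6 x).const_mul (2:ℝ)).sub
      ((hasDerivAt_pow 4 x).const_mul (62*y^2))).sub
      ((hasDerivAt_pow 2 x).const_mul (18*y^4))).add_const (14*y^6)
    exact this.congr_deriv (by push_cast; ring)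
  have hDen : HasDerivAt (fun x' : ℝ => (x'^2 + y^2)^2) (2*(x^2+y^2)*(2*x)) x := by
    have := (hsx x y).pow 2
    exact this.congr_deriv (by push_cast; ring)
  have hDne : (x^2 + y^2)^2 ≠ 0 := pow_ne_zero _ h.ne'
  have H := (hP.mul (hlogx x y h)).add (hNum.div hDen hDne)
  have hfun : (fun x' => F2 x' y) = fun x' : ℝ =>
      (12*y^2 - 12*x'^2) * Real.log (x'^2 + y^2) +
        (2*x'^6 - 62*y^2*x'^4 - 18*y^4*x'^2 + 14*y^6) / (x'^2 + y^2)^2 := by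
    funext t; simp only [F2]; ring
  rw [hfun]
  refine H.congr_deriv ?_
  simp only [F3]
  field_simp
  ring

lemma hd4 (x y : ℝ) (h : 0 < x^2 + y^2) :
    HasDerivAt (fun x' => F3 x' y) (F4 x y) x := by
  have hP : HasDerivAt (fun x' : ℝ => -24*x') (-24 : ℝ) x := by
    have := (hasDerivAt_id x).const_mul (-24 : ℝ)
    exact this.congr_deriv (by ring)
  have hNum : HasDerivAt (fun x' : ℝ => -20*x'^7 - 12*y^2*x'^5 - 188*y^4*x'^3 - 68*y^6*x')
      (-140*x^6 - 60*x^4*y^2 - 564*x^2*y^4 - 68*y^6) x := by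
    have := ((((hasDerivAt_pow 7 x).const_mul (-20:ℝ)).sub
      ((hasDerivAt_pow 5 x).const_mul (12*y^2))).sub
      ((hasDerivAt_pow 3 x).const_mul (188*y^4))).sub ((hasDerivAt_id x).const_mul (68*y^6))
    exact this.congr_deriv (by push_cast; ring)
  have hDen : HasDerivAt (fun x' : ℝ => (x'^2 + y^2)^3) (3*(x^2+y^2)^2*(2*x)) x := by
    have := (hsx x y).pow 3
    exact this.congr_deriv (by push_cast; ring)
  have hDne : (x^2 + y^2)^3 ≠ 0 := pow_ne_zero _ h.ne'
  have H := (hP.mul (hlogx x y h)).add (hNum.div hDen hDne)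
  have hfun : (fun x' => F3 x' y) = fun x' : ℝ =>
      (-24*x') * Real.log (x'^2 + y^2) +
        (-20*x'^7 - 12*y^2*x'^5 - 188*y^4*x'^3 - 68*y^6*x') / (x'^2 + y^2)^3 := by
    funext t; simp only [F3]; ring
  rw [hfun]
  refine H.congr_deriv ?_
  simp only [F4]
  field_simp
  ring

lemma step1 (x y : ℝ) (h : 0 < x^2 + y^2) : pdy G x y = F1 x y := by
  simp only [pdy]; exact (hd1 x y h).deriv

lemma step2 (x y : ℝ) (h : 0 < x^2 + y^2) : pdy (pdy G) x y = F2 x y := by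
  have hU : IsOpen {p : ℝ | 0 < x^2 + p^2} :=
    isOpen_lt continuous_const (by continuity)
  have hev : (fun y' => pdy G x y') =ᶠ[nhds y] fun y' => F1 x y' := by
    filter_upwards [hU.mem_nhds h] with y' hy'
    exact step1 x y' hy'
  show deriv (fun y' => pdy G x y') y = F2 x y
  rw [hev.deriv_eq]
  exact (hd2 x y h).deriv

lemma step3 (x y : ℝ) (h : 0 < x^2 + y^2) : pdx (pdy (pdy G)) x y = F3 x y := by
  have hU : IsOpen {p : ℝ | 0 < p^2 + y^2} :=
    isOpen_lt continuous_const (by continuity)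
  have hev : (fun x' => pdy (pdy G) x' y) =ᶠ[nhds x] fun x' => F2 x' y := by
    filter_upwards [hU.mem_nhds h] with x' hx'
    exact step2 x' y hx'
  show deriv (fun x' => pdy (pdy G) x' y) x = F3 x y
  rw [hev.deriv_eq]
  exact (hd3 x y h).deriv

lemma step4 (x y : ℝ) (h : 0 < x^2 + y^2) : pdx (pdx (pdy (pdy G))) x y = F4 x y := by
  have hU : IsOpen {p : ℝ | 0 < p^2 + y^2} :=
    isOpen_lt continuous_const (by continuity)
  have hev : (fun x' => pdx (pdy (pdy G)) x' y) =ᶠ[nhds x] fun x' => F3 x' y := by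
    filter_upwards [hU.mem_nhds h] with x' hx'
    exact step3 x' y hx'
  show deriv (fun x' => pdx (pdy (pdy G)) x' y) x = F4 x y
  rw [hev.deriv_eq]
  exact (hd4 x y h).deriv

theorem stmt_10 : ∃ C : ℝ, 0 < C ∧
    ∀ x y : ℝ, 0 < x ^ 2 + y ^ 2 → x ^ 2 + y ^ 2 < 1 →
      |pdx (pdx (pdy (pdy G))) x y + 24 * Real.log (x ^ 2 + y ^ 2)| ≤ C := by
  refine ⟨1040, by norm_num, fun x y h _ => ?_⟩
  rw [step4 x y h]
  have hkey : F4 x y + 24 * Real.log (x ^ 2 + y ^ 2) =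
      (-68*x^8 - 272*x^6*y^2 + 360*x^4*y^4 - 272*x^2*y^6 - 68*y^8) / (x^2 + y^2)^4 := by
    simp only [F4]; ring
  rw [hkey]
  have hs4 : (0:ℝ) < (x^2 + y^2)^4 := pow_pos h 4
  rw [abs_div, abs_of_pos hs4, div_le_iff₀ hs4]
  rw [abs_le]
  constructor
  · nlinarith [sq_nonneg (x^4), sq_nonneg (x^3*y), sq_nonneg (x^2*y^2), sq_nonneg (x*y^3),
      sq_nonneg (y^4)]
  · nlinarith [sq_nonneg (x^4), sq_nonneg (x^3*y), sq_nonneg (x^2*y^2), sq_nonneg (x*y^3),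
      sq_nonneg (y^4)]
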